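/- Suppose a, b, c, δ are real numbers with c > 0, δ > 0 and δ + c - a - b > 0. Then ∫₀¹ t^{c-1} (1-t)^{δ-1} · ₂F₁(a, b; c; t) dt = Γ(c) Γ(δ) Γ(δ+c-a-b) / (Γ(δ+c-a) Γ(δ+c-b)). -/

import Mathlib

open scoped Real
open scoped Topology

/-- The Pochhammer symbol `(a)_k = a(a+1)⋯(a+k-1)`. -/
noncomputable def poch (a : ℝ) (k : ℕ) : ℝ := Polynomial.eval a (ascPochhammer ℝ k)

/-- The Gauss hypergeometric function `₂F₁(a, b; c; x)`. -/
noncomputable def hyperg (a b c x : ℝ) : ℝ :=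
  ∑' k : ℕ, poch a k * poch b k / (poch c k * (Nat.factorial k)) * x ^ k

lemma poch_zero (a : ℝ) : poch a 0 = 1 := by simp [poch]

lemma poch_succ (a : ℝ) (k : ℕ) : poch a (k + 1) = poch a k * (a + k) := by
  simp [poch, ascPochhammer_succ_eval]

lemma poch_pos {a : ℝ} (ha : 0 < a) (k : ℕ) : 0 < poch a k :=
  ascPochhammer_pos k a ha

lemma poch_prod (a : ℝ) (k : ℕ) : poch a k = ∏ j ∈ Finset.range k, (a + j) := by
  induction k with
  | zero => simp [poch_zero]
  | succ k ih => rw [poch_succ, ih, Finset.prod_range_succ]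

lemma poch_ne_zero {a : ℝ} (ha : ∀ m : ℕ, a ≠ -m) (k : ℕ) : poch a k ≠ 0 := by
  rw [poch_prod]
  refine Finset.prod_ne_zero_iff.mpr fun j _ => ?_
  intro hj
  exact ha j (by linarith)

lemma poch_eventually_zero {a : ℝ} {m : ℕ} (ha : a = -m) : ∀ k, m < k → poch a k = 0 := by
  intro k hk
  rw [poch_prod]
  apply Finset.prod_eq_zero (Finset.mem_range.mpr hk)
  rw [ha]; ring

lemma gammaSeq_eq (x : ℝ) (n : ℕ) :
    Real.GammaSeq x n = (n : ℝ) ^ x * n.factorial / poch x (n + 1) := by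
  rw [Real.GammaSeq, poch_prod]

lemma poch_eq_gammaSeq {x : ℝ} (hx : ∀ m : ℕ, x ≠ -m) {n : ℕ} (hn : 1 ≤ n) :
    poch x (n + 1) = (n : ℝ) ^ x * n.factorial / Real.GammaSeq x n := by
  have h1 : poch x (n + 1) ≠ 0 := poch_ne_zero hx _
  have h2 : (n : ℝ) ^ x ≠ 0 := (Real.rpow_pos_of_pos (by exact_mod_cast hn) x).ne'
  have h3 : (n.factorial : ℝ) ≠ 0 := by exact_mod_cast n.factorial_ne_zero
  rw [gammaSeq_eq]
  field_simp

lemma gammaSeq_ne_zero {x : ℝ} (hx : ∀ m : ℕ, x ≠ -m) {n : ℕ} (hn : 1 ≤ n) :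
    Real.GammaSeq x n ≠ 0 := by
  rw [gammaSeq_eq]
  apply div_ne_zero
  · apply mul_ne_zero
    · exact (Real.rpow_pos_of_pos (by exact_mod_cast hn) x).ne'
    · exact_mod_cast n.factorial_ne_zero
  · exact poch_ne_zero hx _

noncomputable def hterm (a b c : ℝ) (k : ℕ) : ℝ :=
  poch a k * poch b k / (poch c k * k.factorial)

open Filter Asymptotics in
lemma hterm_isBigO_aux (a b c : ℝ) (hc : 0 < c) (ha : ∀ m : ℕ, a ≠ -m) (hb : ∀ m : ℕ, b ≠ -m) :
    (fun n => hterm a b c n) =O[atTop] fun n => (n : ℝ) ^ (a + b - c - 1) := by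
  have hc' : ∀ m : ℕ, c ≠ -m := fun m hm => by
    have : (0:ℝ) ≤ m := m.cast_nonneg
    linarith
  have hΓa : Real.Gamma a ≠ 0 := Real.Gamma_ne_zero ha
  have hΓb : Real.Gamma b ≠ 0 := Real.Gamma_ne_zero hb
  set L : ℝ := Real.Gamma c / (Real.Gamma a * Real.Gamma b) with hL
  have key : ∀ n : ℕ, 1 ≤ n →
      hterm a b c (n + 1) * ((n : ℝ) + 1) ^ (c + 1 - a - b) =
        (((n : ℝ) + 1) / n) ^ (c - a - b) *
          (Real.GammaSeq c n / (Real.GammaSeq a n * Real.GammaSeq b n)) := by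
    intro n hn
    have hn0 : (0 : ℝ) < n := by exact_mod_cast hn
    have hn1 : (0 : ℝ) < (n : ℝ) + 1 := by positivity
    have hga : Real.GammaSeq a n ≠ 0 := gammaSeq_ne_zero ha hn
    have hgb : Real.GammaSeq b n ≠ 0 := gammaSeq_ne_zero hb hn
    have hgc : Real.GammaSeq c n ≠ 0 := gammaSeq_ne_zero hc' hn
    have hf : (n.factorial : ℝ) ≠ 0 := by exact_mod_cast n.factorial_ne_zero
    have e1 : (n : ℝ) ^ a * (n : ℝ) ^ b = (n : ℝ) ^ c / (n : ℝ) ^ (c - a - b) := by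
      rw [← Real.rpow_add hn0, ← Real.rpow_sub hn0]
      ring_nf
    have e2 : ((n : ℝ) + 1) ^ (c + 1 - a - b) = ((n : ℝ) + 1) ^ (c - a - b) * ((n : ℝ) + 1) := by
      rw [show c + 1 - a - b = (c - a - b) + 1 by ring, Real.rpow_add hn1, Real.rpow_one]
    have e3 : ((n + 1).factorial : ℝ) = ((n : ℝ) + 1) * n.factorial := by
      push_cast [Nat.factorial_succ]; ring
    have e4 : (((n : ℝ) + 1) / n) ^ (c - a - b)
        = ((n : ℝ) + 1) ^ (c - a - b) / (n : ℝ) ^ (c - a - b) :=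
      Real.div_rpow hn1.le hn0.le _
    have hpc : (0 : ℝ) < (n : ℝ) ^ (c - a - b) := Real.rpow_pos_of_pos hn0 _
    have hpc1 : (0 : ℝ) < ((n : ℝ) + 1) ^ (c - a - b) := Real.rpow_pos_of_pos hn1 _
    rw [hterm, poch_eq_gammaSeq ha hn, poch_eq_gammaSeq hb hn, poch_eq_gammaSeq hc' hn,
      e2, e3, e4]
    have e1' : (n : ℝ) ^ a * (n : ℝ) ^ b * (n : ℝ) ^ (c - a - b) = (n : ℝ) ^ c := by
      rw [← Real.rpow_add hn0, ← Real.rpow_add hn0]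
      ring_nf
    field_simp
    linear_combination e1'
  have htend2 : Tendsto (fun n : ℕ =>
      (((n : ℝ) + 1) / n) ^ (c - a - b) *
        (Real.GammaSeq c n / (Real.GammaSeq a n * Real.GammaSeq b n))) atTop (𝓝 L) := by
    have h1 : Tendsto (fun n : ℕ => (((n : ℝ) + 1) / n)) atTop (𝓝 1) := by
      have h0 : Tendsto (fun n : ℕ => 1 + 1 / (n:ℝ)) atTop (𝓝 (1 + 0)) :=
        tendsto_const_nhds.add tendsto_one_div_atTop_nhds_zero_nat
      rw [add_zero] at h0
      refine h0.congr' ?_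
      filter_upwards [eventually_ge_atTop 1] with n hn
      have hn0 : (0 : ℝ) < n := by exact_mod_cast hn
      field_simp
    have h2 : Tendsto (fun n : ℕ => (((n : ℝ) + 1) / n) ^ (c - a - b)) atTop (𝓝 1) := by
      have := h1.rpow_const (p := c - a - b) (Or.inl one_ne_zero)
      simpa using this
    have h3 : Tendsto (fun n : ℕ => Real.GammaSeq c n / (Real.GammaSeq a n * Real.GammaSeq b n))
        atTop (𝓝 L) :=
      (Real.GammaSeq_tendsto_Gamma c).div
        ((Real.GammaSeq_tendsto_Gamma a).mul (Real.GammaSeq_tendsto_Gamma b))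
        (mul_ne_zero hΓa hΓb)
    simpa using h2.mul h3
  have htend : Tendsto (fun n : ℕ => hterm a b c n * (n : ℝ) ^ (c + 1 - a - b)) atTop (𝓝 L) := by
    rw [← Filter.tendsto_add_atTop_iff_nat 1]
    refine htend2.congr' ?_
    filter_upwards [eventually_ge_atTop 1] with n hn
    rw [← key n hn]
    push_cast
    ring_nf
  have hO1 : (fun n : ℕ => hterm a b c n * (n : ℝ) ^ (c + 1 - a - b)) =O[atTop] (fun _ => (1:ℝ)) :=
    htend.isBigO_one ℝ
  have hO2 : (fun n : ℕ => hterm a b c n * (n : ℝ) ^ (c + 1 - a - b) * (n : ℝ) ^ (a + b - c - 1))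
      =O[atTop] fun n => (1:ℝ) * (n : ℝ) ^ (a + b - c - 1) :=
    hO1.mul (isBigO_refl _ _)
  have heq : (fun n : ℕ => hterm a b c n) =ᶠ[atTop]
      (fun n : ℕ => hterm a b c n * (n : ℝ) ^ (c + 1 - a - b) * (n : ℝ) ^ (a + b - c - 1)) := by
    filter_upwards [eventually_ge_atTop 1] with n hn
    have hn0 : (0 : ℝ) < n := by exact_mod_cast hn
    rw [mul_assoc, ← Real.rpow_add hn0,
      show c + 1 - a - b + (a + b - c - 1) = 0 by ring, Real.rpow_zero, mul_one]
  exact heq.trans_isBigO (by simpa using hO2)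


open Filter Asymptotics in
lemma hterm_isBigO (a b c : ℝ) (hc : 0 < c) :
    (fun n => hterm a b c n) =O[atTop] fun n => (n : ℝ) ^ (a + b - c - 1) := by
  by_cases ha : ∀ m : ℕ, a ≠ -m
  · by_cases hb : ∀ m : ℕ, b ≠ -m
    · exact hterm_isBigO_aux a b c hc ha hb
    · push_neg at hb
      obtain ⟨m, hm⟩ := hb
      rw [isBigO_iff]
      refine ⟨1, ?_⟩
      filter_upwards [eventually_gt_atTop m] with n hn
      rw [hterm, poch_eventually_zero hm n hn]
      simp
  · push_neg at ha
    obtain ⟨m, hm⟩ := ha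
    rw [isBigO_iff]
    refine ⟨1, ?_⟩
    filter_upwards [eventually_gt_atTop m] with n hn
    rw [hterm, poch_eventually_zero hm n hn]
    simp

open Filter Asymptotics in
lemma hterm_abs_summable (a b c : ℝ) (hc : 0 < c) (h : 0 < c - a - b) :
    Summable fun n => |hterm a b c n| := by
  have hg : Summable fun n : ℕ => (n : ℝ) ^ (a + b - c - 1) :=
    (Real.summable_nat_rpow).mpr (by linarith)
  exact summable_of_isBigO_nat hg (hterm_isBigO a b c hc).abs_left

lemma hterm_summable (a b c : ℝ) (hc : 0 < c) (h : 0 < c - a - b) :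
    Summable fun n => hterm a b c n :=
  (hterm_abs_summable a b c hc h).of_abs

open Filter Asymptotics in
lemma hterm_mul_tendsto_zero (a b c : ℝ) (hc : 0 < c) (h : 0 < c - a - b) :
    Tendsto (fun n : ℕ => (n : ℝ) * hterm a b c n) atTop (𝓝 0) := by
  have hO : (fun n : ℕ => (n : ℝ) * hterm a b c n) =O[atTop]
      fun n : ℕ => (n : ℝ) ^ (a + b - c) := by
    have h1 : (fun n : ℕ => (n : ℝ) * hterm a b c n) =O[atTop]
        fun n : ℕ => (n : ℝ) * (n : ℝ) ^ (a + b - c - 1) :=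
      (isBigO_refl (fun n : ℕ => (n : ℝ)) atTop).mul (hterm_isBigO a b c hc)
    refine h1.trans (IsBigO.of_bound 1 ?_)
    filter_upwards [eventually_ge_atTop 1] with n hn
    have hn0 : (0 : ℝ) < n := by exact_mod_cast hn
    have e := Real.rpow_add hn0 1 (a + b - c - 1)
    rw [Real.rpow_one, show (1:ℝ) + (a + b - c - 1) = a + b - c by ring] at e
    rw [e]
    simp
  have hg : Tendsto (fun n : ℕ => (n : ℝ) ^ (a + b - c)) atTop (𝓝 0) := by
    have := tendsto_rpow_neg_atTop (y := c - a - b) h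
    have h2 := this.comp tendsto_natCast_atTop_atTop (α := ℕ)
    simpa [Function.comp_def, show -(c - a - b) = a + b - c by ring] using h2
  exact hO.trans_tendsto hg

lemma poch_succ_left (a : ℝ) (k : ℕ) : poch a (k + 1) = a * poch (a + 1) k := by
  simp [poch, ascPochhammer_succ_left, Polynomial.eval_comp]

lemma hterm_zero (a b c : ℝ) : hterm a b c 0 = 1 := by
  simp [hterm, poch_zero]

lemma hterm_telescope (a b e : ℝ) (he : 0 < e) (k : ℕ) :
    e * (e - a - b) * hterm a b e k - (e - a) * (e - b) * hterm a b (e + 1) k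
      = e * k * hterm a b e k - e * (k + 1) * hterm a b e (k + 1) := by
  have hpe : 0 < poch e k := poch_pos he k
  have hpe1 : 0 < poch (e + 1) k := poch_pos (by linarith) k
  have hek : 0 < e + k := by positivity
  have hf : (0:ℝ) < k.factorial := by exact_mod_cast k.factorial_pos
  have h1 : poch (e + 1) k = poch e k * (e + k) / e := by
    rw [← poch_succ, poch_succ_left]
    field_simp
  have h2 : poch a (k + 1) = poch a k * (a + k) := poch_succ a k
  have h3 : poch b (k + 1) = poch b k * (b + k) := poch_succ b k
  have h4 : poch e (k + 1) = poch e k * (e + k) := poch_succ e k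
  have h5 : ((k + 1).factorial : ℝ) = (k + 1) * k.factorial := by
    push_cast [Nat.factorial_succ]; ring
  simp only [hterm]
  rw [h1, h2, h3, h4, h5]
  have hk1 : (0:ℝ) < (k:ℝ) + 1 := by positivity
  field_simp
  ring

open Filter in
lemma contiguous (a b e : ℝ) (he : 0 < e) (h : 0 < e - a - b) :
    e * (e - a - b) * ∑' k, hterm a b e k
      = (e - a) * (e - b) * ∑' k, hterm a b (e + 1) k := by
  have hs1 := hterm_summable a b e he h
  have hs2 := hterm_summable a b (e + 1) (by linarith) (by linarith)
  have hsum : HasSum (fun k => e * (e - a - b) * hterm a b e k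
        - (e - a) * (e - b) * hterm a b (e + 1) k)
      (e * (e - a - b) * ∑' k, hterm a b e k
        - (e - a) * (e - b) * ∑' k, hterm a b (e + 1) k) :=
    (hs1.hasSum.mul_left _).sub (hs2.hasSum.mul_left _)
  have htel : Tendsto (fun K => ∑ k ∈ Finset.range K,
      (e * (e - a - b) * hterm a b e k - (e - a) * (e - b) * hterm a b (e + 1) k))
      atTop (𝓝 0) := by
    have heq : ∀ K, ∑ k ∈ Finset.range K,
        (e * (e - a - b) * hterm a b e k - (e - a) * (e - b) * hterm a b (e + 1) k)
        = - (e * K * hterm a b e K) := by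
      intro K
      rw [Finset.sum_congr rfl (fun k _ => hterm_telescope a b e he k)]
      have h6 := Finset.sum_range_sub' (fun k : ℕ => e * k * hterm a b e k) K
      push_cast at h6 ⊢
      rw [h6]
      simp
    simp_rw [heq]
    have := (hterm_mul_tendsto_zero a b e he h).const_mul e
    simp only [mul_zero] at this
    convert this.neg using 2 with K
    · ring
    · simp
  have := tendsto_nhds_unique hsum.tendsto_sum_nat htel
  linarith

lemma iterate_contiguous (a b e : ℝ) (he : 0 < e) (h : 0 < e - a - b) (n : ℕ) :
    poch e n * poch (e - a - b) n * ∑' k, hterm a b e k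
      = poch (e - a) n * poch (e - b) n * ∑' k, hterm a b (e + n) k := by
  induction n with
  | zero => simp [poch_zero]
  | succ n ih =>
    have hen : (0:ℝ) < e + n := by positivity
    have hcont := contiguous a b (e + n) hen (by push_cast; linarith)
    have hcast : e + (n:ℝ) + 1 = e + ((n:ℕ) + 1 : ℕ) := by push_cast; ring
    rw [poch_succ, poch_succ, poch_succ, poch_succ]
    rw [← hcast]
    linear_combination ((e + (n:ℝ)) * (e + n - a - b)) * ih
      + (poch (e - a) n * poch (e - b) n) * hcont

open Filter in
lemma ratio_tendsto (a b e : ℝ) (he : 0 < e) (h : 0 < e - a - b) :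
    Tendsto (fun n : ℕ => poch (e - a) n * poch (e - b) n / (poch e n * poch (e - a - b) n))
      atTop (𝓝 (Real.Gamma e * Real.Gamma (e - a - b)
        / (Real.Gamma (e - a) * Real.Gamma (e - b)))) := by
  have he' : ∀ m : ℕ, e ≠ -m := fun m hm => by
    have : (0:ℝ) ≤ m := m.cast_nonneg; linarith
  have hd' : ∀ m : ℕ, e - a - b ≠ -m := fun m hm => by
    have : (0:ℝ) ≤ m := m.cast_nonneg; linarith
  by_cases ha : ∀ m : ℕ, e - a ≠ -m
  · by_cases hb : ∀ m : ℕ, e - b ≠ -m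
    · rw [← Filter.tendsto_add_atTop_iff_nat 1]
      have key : ∀ n : ℕ, 1 ≤ n →
          poch (e - a) (n + 1) * poch (e - b) (n + 1)
            / (poch e (n + 1) * poch (e - a - b) (n + 1))
          = Real.GammaSeq e n * Real.GammaSeq (e - a - b) n
            / (Real.GammaSeq (e - a) n * Real.GammaSeq (e - b) n) := by
        intro n hn
        have hn0 : (0 : ℝ) < n := by exact_mod_cast hn
        have hga := gammaSeq_ne_zero ha hn
        have hgb := gammaSeq_ne_zero hb hn
        have hge := gammaSeq_ne_zero he' hn
        have hgd := gammaSeq_ne_zero hd' hn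
        have hf : (n.factorial : ℝ) ≠ 0 := by exact_mod_cast n.factorial_ne_zero
        have e5 : (n:ℝ) ^ (e - a) * (n:ℝ) ^ (e - b) = (n:ℝ) ^ e * (n:ℝ) ^ (e - a - b) := by
          rw [← Real.rpow_add hn0, ← Real.rpow_add hn0]; ring_nf
        have hra : (0:ℝ) < (n:ℝ) ^ (e - a) := Real.rpow_pos_of_pos hn0 _
        have hrb : (0:ℝ) < (n:ℝ) ^ (e - b) := Real.rpow_pos_of_pos hn0 _
        have hre : (0:ℝ) < (n:ℝ) ^ e := Real.rpow_pos_of_pos hn0 _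
        have hrd : (0:ℝ) < (n:ℝ) ^ (e - a - b) := Real.rpow_pos_of_pos hn0 _
        rw [poch_eq_gammaSeq ha hn, poch_eq_gammaSeq hb hn, poch_eq_gammaSeq he' hn,
          poch_eq_gammaSeq hd' hn]
        field_simp
        linear_combination e5
      have hten : Tendsto (fun n : ℕ => Real.GammaSeq e n * Real.GammaSeq (e - a - b) n
          / (Real.GammaSeq (e - a) n * Real.GammaSeq (e - b) n)) atTop
          (𝓝 (Real.Gamma e * Real.Gamma (e - a - b)
            / (Real.Gamma (e - a) * Real.Gamma (e - b)))) :=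
        ((Real.GammaSeq_tendsto_Gamma e).mul (Real.GammaSeq_tendsto_Gamma (e - a - b))).div
          ((Real.GammaSeq_tendsto_Gamma (e - a)).mul (Real.GammaSeq_tendsto_Gamma (e - b)))
          (mul_ne_zero (Real.Gamma_ne_zero ha) (Real.Gamma_ne_zero hb))
      refine hten.congr' ?_
      filter_upwards [eventually_ge_atTop 1] with n hn
      exact (key n hn).symm
    · push_neg at hb
      obtain ⟨m, hm⟩ := hb
      have hΓ : Real.Gamma (e - b) = 0 := by rw [hm]; exact Real.Gamma_neg_nat_eq_zero m
      rw [hΓ, mul_zero, div_zero]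
      refine Tendsto.congr' ?_ tendsto_const_nhds
      filter_upwards [eventually_gt_atTop m] with n hn
      rw [poch_eventually_zero hm n hn]
      simp
  · push_neg at ha
    obtain ⟨m, hm⟩ := ha
    have hΓ : Real.Gamma (e - a) = 0 := by rw [hm]; exact Real.Gamma_neg_nat_eq_zero m
    rw [hΓ, zero_mul, div_zero]
    refine Tendsto.congr' ?_ tendsto_const_nhds
    filter_upwards [eventually_gt_atTop m] with n hn
    rw [poch_eventually_zero hm n hn]
    simp

lemma poch_tail_mono (e : ℝ) (he : 0 < e) {x : ℝ} (hx : e + 1 ≤ x) (k : ℕ) :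
    x * poch (e + 1) (k + 1) ≤ (e + 1) * poch x (k + 1) := by
  induction k with
  | zero =>
    rw [poch_succ, poch_succ, poch_zero, poch_zero]
    push_cast
    nlinarith
  | succ k ih =>
    have hA : 0 < poch (e + 1) (k + 1) := poch_pos (by linarith) _
    have hB : 0 < poch x (k + 1) := poch_pos (by linarith) _
    rw [poch_succ (e + 1) (k + 1), poch_succ x (k + 1)]
    have h1 : (0:ℝ) < e + 1 + ((k:ℝ) + 1) := by positivity
    have h2 : e + 1 + ((k:ℝ) + 1) ≤ x + ((k:ℝ) + 1) := by linarith
    push_cast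
    nlinarith [mul_le_mul_of_nonneg_right ih h1.le,
      mul_le_mul_of_nonneg_left h2 (by positivity : (0:ℝ) ≤ (e + 1) * poch x (k + 1))]

lemma aux_div_ineq {N P1 Pn f u v : ℝ} (hN : 0 ≤ N) (hP1 : 0 < P1) (hPn : 0 < Pn)
    (hf : 0 < f) (hu : 0 < u) (hv : 0 < v) (hle : v * P1 ≤ u * Pn) :
    N / (Pn * f) ≤ u / v * (N / (P1 * f)) := by
  rw [div_mul_div_comm, div_le_div_iff₀ (by positivity) (by positivity)]
  nlinarith [mul_le_mul_of_nonneg_left hle (mul_nonneg hN hf.le)]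

open Filter in
lemma tail_tendsto (a b e : ℝ) (he : 0 < e) (h : 0 < e - a - b) :
    Tendsto (fun n : ℕ => ∑' k, hterm a b (e + n) k) atTop (𝓝 1) := by
  have hsum1 : Summable fun k => |hterm a b (e + 1) k| :=
    hterm_abs_summable a b (e + 1) (by linarith) (by linarith)
  have hsum1' : Summable fun k => |hterm a b (e + 1) (k + 1)| :=
    (summable_nat_add_iff (f := fun k => |hterm a b (e + 1) k|) 1).mpr hsum1
  set M : ℝ := ∑' k, |hterm a b (e + 1) (k + 1)| with hM
  have hM0 : 0 ≤ M := tsum_nonneg fun k => abs_nonneg _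
  have key : ∀ n : ℕ, 1 ≤ n →
      |(∑' k, hterm a b (e + n) k) - 1| ≤ (e + 1) * M / (e + n) := by
    intro n hn
    have hen : (0:ℝ) < e + n := by positivity
    have hen1 : e + 1 ≤ e + (n:ℝ) := by
      have : (1:ℝ) ≤ n := by exact_mod_cast hn
      linarith
    have hsn : Summable fun k => hterm a b (e + n) k :=
      hterm_summable a b (e + n) hen (by linarith)
    have hsn' : Summable fun k => hterm a b (e + n) (k + 1) :=
      (summable_nat_add_iff (f := fun k => hterm a b (e + n) k) 1).mpr hsn
    have hsna : Summable fun k => |hterm a b (e + n) (k + 1)| := hsn'.abs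
    have hdec : (∑' k, hterm a b (e + n) k) = 1 + ∑' k, hterm a b (e + n) (k + 1) := by
      rw [Summable.tsum_eq_zero_add hsn, hterm_zero]
    have hptw : ∀ k : ℕ, |hterm a b (e + n) (k + 1)|
        ≤ (e + 1) / (e + n) * |hterm a b (e + 1) (k + 1)| := by
      intro k
      have hp1 : 0 < poch (e + 1) (k + 1) := poch_pos (by linarith) _
      have hpn : 0 < poch (e + n) (k + 1) := poch_pos hen _
      have hf : (0:ℝ) < ((k + 1).factorial : ℝ) := by exact_mod_cast (k + 1).factorial_pos
      have hmono := poch_tail_mono e he hen1 k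
      rw [hterm, hterm, abs_div, abs_of_pos (by positivity : (0:ℝ) < poch (e+n) (k+1) * ((k+1).factorial : ℝ)),
        abs_div, abs_of_pos (by positivity : (0:ℝ) < poch (e+1) (k+1) * ((k+1).factorial : ℝ))]
      exact aux_div_ineq (abs_nonneg _) hp1 hpn hf (by linarith) hen hmono
    have h1 : |(∑' k, hterm a b (e + n) k) - 1| ≤ ∑' k, |hterm a b (e + n) (k + 1)| := by
      rw [hdec]
      simp only [add_sub_cancel_left]
      calc |∑' k, hterm a b (e + n) (k + 1)| = ‖∑' k, hterm a b (e + n) (k + 1)‖ := rfl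
        _ ≤ ∑' k, ‖hterm a b (e + n) (k + 1)‖ := norm_tsum_le_tsum_norm hsna
    have h2 : (∑' k, |hterm a b (e + n) (k + 1)|)
        ≤ ∑' k, (e + 1) / (e + n) * |hterm a b (e + 1) (k + 1)| :=
      Summable.tsum_le_tsum hptw hsna (hsum1'.mul_left _)
    have h3 : (∑' k, (e + 1) / (e + n) * |hterm a b (e + 1) (k + 1)|)
        = (e + 1) / (e + n) * M := tsum_mul_left
    calc |(∑' k, hterm a b (e + n) k) - 1| ≤ (e + 1) / (e + n) * M := by
          rw [← h3]; exact h1.trans h2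
      _ = (e + 1) * M / (e + n) := by ring
  have hb : Tendsto (fun n : ℕ => (e + 1) * M / (e + n)) atTop (𝓝 0) := by
    have h4 : Tendsto (fun n : ℕ => e + (n : ℝ)) atTop atTop :=
      tendsto_atTop_add_const_left _ e tendsto_natCast_atTop_atTop
    have h5 := h4.inv_tendsto_atTop
    have h6 := h5.const_mul ((e + 1) * M)
    rw [mul_zero] at h6
    refine h6.congr fun n => ?_
    simp [div_eq_mul_inv]
  have h0 : Tendsto (fun n : ℕ => (∑' k, hterm a b (e + n) k) - 1) atTop (𝓝 0) := by
    refine squeeze_zero_norm' ?_ hb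
    filter_upwards [eventually_ge_atTop 1] with n hn
    exact key n hn
  have := h0.add_const 1
  rw [zero_add] at this
  refine this.congr fun n => by ring

open Filter in
lemma gauss_summation (a b e : ℝ) (he : 0 < e) (h : 0 < e - a - b) :
    (∑' k, hterm a b e k) = Real.Gamma e * Real.Gamma (e - a - b)
      / (Real.Gamma (e - a) * Real.Gamma (e - b)) := by
  have hstep : ∀ n : ℕ, (∑' k, hterm a b e k)
      = poch (e - a) n * poch (e - b) n / (poch e n * poch (e - a - b) n)
        * ∑' k, hterm a b (e + n) k := by
    intro n
    have hp1 : 0 < poch e n := poch_pos he n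
    have hp2 : 0 < poch (e - a - b) n := poch_pos h n
    have := iterate_contiguous a b e he h n
    field_simp
    linarith [this]
  have htend : Tendsto (fun n : ℕ =>
      poch (e - a) n * poch (e - b) n / (poch e n * poch (e - a - b) n)
        * ∑' k, hterm a b (e + n) k) atTop
      (𝓝 (Real.Gamma e * Real.Gamma (e - a - b)
        / (Real.Gamma (e - a) * Real.Gamma (e - b)) * 1)) :=
    (ratio_tendsto a b e he h).mul (tail_tendsto a b e he h)
  rw [mul_one] at htend
  have hconst : Tendsto (fun _ : ℕ => ∑' k, hterm a b e k) atTop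
      (𝓝 (∑' k, hterm a b e k)) := tendsto_const_nhds
  exact tendsto_nhds_unique (hconst.congr fun n => hstep n) htend

lemma Gamma_poch (x : ℝ) (hx : 0 < x) (k : ℕ) :
    Real.Gamma (x + k) = poch x k * Real.Gamma x := by
  induction k with
  | zero => simp [poch_zero]
  | succ k ih =>
    have hxk : x + (k:ℝ) ≠ 0 := by positivity
    rw [show x + ((k:ℕ) + 1 : ℕ) = (x + k) + 1 by push_cast; ring,
      Real.Gamma_add_one hxk, ih, poch_succ]
    ring

lemma complex_integrand_eq (u v : ℝ) {x : ℝ} (hx0 : 0 ≤ x) (hx1 : x ≤ 1) :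
    (x:ℂ) ^ ((u:ℂ) - 1) * ((1:ℂ) - (x:ℂ)) ^ ((v:ℂ) - 1)
      = ((x ^ (u - 1) * (1 - x) ^ (v - 1) : ℝ) : ℂ) := by
  have h1 : ((1:ℂ) - (x:ℂ)) = ((1 - x : ℝ) : ℂ) := by push_cast; ring
  rw [h1, show ((u:ℂ) - 1) = ((u - 1 : ℝ) : ℂ) by push_cast; ring,
    show ((v:ℂ) - 1) = ((v - 1 : ℝ) : ℂ) by push_cast; ring,
    ← Complex.ofReal_cpow hx0, ← Complex.ofReal_cpow (by linarith : (0:ℝ) ≤ 1 - x),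
    ← Complex.ofReal_mul]

lemma betaIntegrable (u v : ℝ) (hu : 0 < u) (hv : 0 < v) :
    MeasureTheory.IntegrableOn (fun t => t ^ (u - 1) * (1 - t) ^ (v - 1))
      (Set.Ioo (0:ℝ) 1) := by
  have hc : IntervalIntegrable (fun x : ℝ => (x:ℂ) ^ ((u:ℂ) - 1) * ((1:ℂ) - (x:ℂ)) ^ ((v:ℂ) - 1))
      MeasureTheory.volume 0 1 := Complex.betaIntegral_convergent (by simpa using hu) (by simpa using hv)
  have hn := hc.norm
  rw [intervalIntegrable_iff_integrableOn_Ioc_of_le (by norm_num)] at hn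
  have hn' := hn.mono_set Set.Ioo_subset_Ioc_self
  refine (MeasureTheory.IntegrableOn.congr_fun hn' ?_ measurableSet_Ioo)
  intro x hx
  obtain ⟨hx0, hx1⟩ := hx
  show ‖(x:ℂ) ^ ((u:ℂ) - 1) * ((1:ℂ) - (x:ℂ)) ^ ((v:ℂ) - 1)‖ = x ^ (u - 1) * (1 - x) ^ (v - 1)
  rw [complex_integrand_eq u v hx0.le hx1.le, Complex.norm_real, Real.norm_eq_abs,
    abs_of_nonneg (mul_nonneg (Real.rpow_nonneg hx0.le _) (Real.rpow_nonneg (by linarith) _))]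

lemma betaEval (u v : ℝ) (hu : 0 < u) (hv : 0 < v) :
    ∫ t in Set.Ioo (0:ℝ) 1, t ^ (u - 1) * (1 - t) ^ (v - 1)
      = Real.Gamma u * Real.Gamma v / Real.Gamma (u + v) := by
  have key := Complex.Gamma_mul_Gamma_eq_betaIntegral
    (show 0 < Complex.re u by simpa using hu) (show 0 < Complex.re v by simpa using hv)
  have hBeta : Complex.betaIntegral u v
      = ((∫ t in Set.Ioo (0:ℝ) 1, t ^ (u - 1) * (1 - t) ^ (v - 1) : ℝ) : ℂ) := by
    rw [Complex.betaIntegral]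
    rw [show (∫ t in Set.Ioo (0:ℝ) 1, t ^ (u - 1) * (1 - t) ^ (v - 1))
        = ∫ t in (0:ℝ)..1, t ^ (u - 1) * (1 - t) ^ (v - 1) by
      rw [intervalIntegral.integral_of_le (by norm_num : (0:ℝ) ≤ 1),
        ← MeasureTheory.integral_Ioc_eq_integral_Ioo]]
    rw [← intervalIntegral.integral_ofReal]
    refine intervalIntegral.integral_congr fun x hx => ?_
    rw [Set.uIcc_of_le (by norm_num : (0:ℝ) ≤ 1)] at hx
    exact complex_integrand_eq u v hx.1 hx.2
  rw [hBeta, ← Complex.ofReal_add, Complex.Gamma_ofReal, Complex.Gamma_ofReal,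
    Complex.Gamma_ofReal, ← Complex.ofReal_mul, ← Complex.ofReal_mul] at key
  have hreal : Real.Gamma u * Real.Gamma v
      = Real.Gamma (u + v) * ∫ t in Set.Ioo (0:ℝ) 1, t ^ (u - 1) * (1 - t) ^ (v - 1) := by
    exact_mod_cast key
  have hΓ : Real.Gamma (u + v) ≠ 0 := (Real.Gamma_pos_of_pos (by linarith)).ne'
  field_simp
  linarith [hreal]

open MeasureTheory in
theorem hyperg_integral_identity' (a b c δ : ℝ) (hc : 0 < c) (hδ : 0 < δ)
    (h : 0 < δ + c - a - b) :
    ∫ t in Set.Ioo (0 : ℝ) 1, t ^ (c - 1) * (1 - t) ^ (δ - 1) *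
      (∑' k : ℕ, hterm a b c k * t ^ k) =
      Real.Gamma c * Real.Gamma δ * Real.Gamma (δ + c - a - b) /
        (Real.Gamma (δ + c - a) * Real.Gamma (δ + c - b)) := by
  have he : 0 < c + δ := by linarith
  have hd : 0 < (c + δ) - a - b := by linarith
  set B0 : ℝ := Real.Gamma c * Real.Gamma δ / Real.Gamma (c + δ) with hB0
  set F : ℕ → ℝ → ℝ := fun k t => hterm a b c k * (t ^ (c + k - 1) * (1 - t) ^ (δ - 1))
    with hF
  have hint : ∀ k, IntegrableOn (F k) (Set.Ioo (0:ℝ) 1) := by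
    intro k
    exact (betaIntegrable (c + k) δ (by positivity) hδ).const_mul (hterm a b c k)
  have hBeta : ∀ k : ℕ, (∫ t in Set.Ioo (0:ℝ) 1, t ^ (c + k - 1) * (1 - t) ^ (δ - 1))
      = poch c k / poch (c + δ) k * B0 := by
    intro k
    have h1 := betaEval (c + k) δ (by positivity) hδ
    rw [show c + (k:ℝ) - 1 = (c + k) - 1 by ring] at h1 ⊢
    rw [h1, show c + (k:ℝ) + δ = (c + δ) + k by ring,
      Gamma_poch c hc k, Gamma_poch (c + δ) he k]
    have hp1 : 0 < poch (c + δ) k := poch_pos he k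
    have hΓ : 0 < Real.Gamma (c + δ) := Real.Gamma_pos_of_pos he
    rw [hB0]
    field_simp
  have hterm_int : ∀ k : ℕ, (∫ t in Set.Ioo (0:ℝ) 1, F k t)
      = B0 * hterm a b (c + δ) k := by
    intro k
    simp only [hF]
    rw [MeasureTheory.integral_const_mul, hBeta k]
    have hp1 : 0 < poch (c + δ) k := poch_pos he k
    have hp2 : 0 < poch c k := poch_pos hc k
    have hf : (0:ℝ) < (k.factorial : ℝ) := by exact_mod_cast k.factorial_pos
    simp only [hterm]
    field_simp
  have hnorm : ∀ k : ℕ, (∫ t in Set.Ioo (0:ℝ) 1, ‖F k t‖)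
      = B0 * |hterm a b (c + δ) k| := by
    intro k
    have heq : Set.EqOn (fun t => ‖F k t‖)
        (fun t => |hterm a b c k| * (t ^ (c + k - 1) * (1 - t) ^ (δ - 1)))
        (Set.Ioo (0:ℝ) 1) := by
      intro t ht
      obtain ⟨ht0, ht1⟩ := ht
      simp only [hF, Real.norm_eq_abs, abs_mul]
      congr 1
      rw [abs_of_nonneg (Real.rpow_nonneg ht0.le _),
        abs_of_nonneg (Real.rpow_nonneg (by linarith : (0:ℝ) ≤ 1 - t) _)]
    rw [MeasureTheory.setIntegral_congr_fun measurableSet_Ioo heq,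
      MeasureTheory.integral_const_mul, hBeta k]
    have hp1 : 0 < poch (c + δ) k := poch_pos he k
    have hp2 : 0 < poch c k := poch_pos hc k
    have hf : (0:ℝ) < (k.factorial : ℝ) := by exact_mod_cast k.factorial_pos
    simp only [hterm, abs_div, abs_of_pos (mul_pos hp2 hf), abs_of_pos (mul_pos hp1 hf)]
    field_simp
  have hsum : Summable (fun k => ∫ t in Set.Ioo (0:ℝ) 1, ‖F k t‖) := by
    refine Summable.congr (((hterm_abs_summable a b (c + δ) he hd).mul_left B0)) ?_
    intro k
    rw [hnorm k]
  have hpoint : Set.EqOn (fun t : ℝ => t ^ (c - 1) * (1 - t) ^ (δ - 1) *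
      (∑' k : ℕ, hterm a b c k * t ^ k)) (fun t => ∑' k, F k t) (Set.Ioo (0:ℝ) 1) := by
    intro t ht
    obtain ⟨ht0, ht1⟩ := ht
    simp only [hF]
    rw [← tsum_mul_left]
    refine tsum_congr fun k => ?_
    have : t ^ (c - 1) * t ^ (k : ℕ) = t ^ (c + k - 1) := by
      rw [← Real.rpow_natCast t k, ← Real.rpow_add ht0,
        show c - 1 + (k:ℝ) = c + k - 1 by ring]
    rw [← this]
    ring
  rw [MeasureTheory.setIntegral_congr_fun measurableSet_Ioo hpoint]
  rw [← MeasureTheory.integral_tsum_of_summable_integral_norm hint hsum]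
  have hfin : (∑' k, ∫ t in Set.Ioo (0:ℝ) 1, F k t) = B0 * ∑' k, hterm a b (c + δ) k := by
    rw [← tsum_mul_left]
    exact tsum_congr fun k => hterm_int k
  rw [hfin, gauss_summation a b (c + δ) he hd]
  have hΓe : Real.Gamma (c + δ) ≠ 0 := (Real.Gamma_pos_of_pos he).ne'
  rw [hB0, div_mul_div_comm,
    show Real.Gamma c * Real.Gamma δ * (Real.Gamma (c + δ) * Real.Gamma (c + δ - a - b))
      = Real.Gamma (c + δ) * (Real.Gamma c * Real.Gamma δ * Real.Gamma (c + δ - a - b)) by ring,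
    show Real.Gamma (c + δ) * (Real.Gamma (c + δ - a) * Real.Gamma (c + δ - b))
      = Real.Gamma (c + δ) * (Real.Gamma (c + δ - a) * Real.Gamma (c + δ - b)) by ring,
    mul_div_mul_left _ _ hΓe,
    show c + δ - a - b = δ + c - a - b by ring, show c + δ - a = δ + c - a by ring,
    show c + δ - b = δ + c - b by ring]


theorem hyperg_integral_identity (a b c δ : ℝ) (hc : 0 < c) (hδ : 0 < δ)
    (h : 0 < δ + c - a - b) :
    ∫ t in Set.Ioo (0 : ℝ) 1, t ^ (c - 1) * (1 - t) ^ (δ - 1) * hyperg a b c t =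
      Real.Gamma c * Real.Gamma δ * Real.Gamma (δ + c - a - b) /
        (Real.Gamma (δ + c - a) * Real.Gamma (δ + c - b)) := by
  have := hyperg_integral_identity' a b c δ hc hδ h
  simpa only [hyperg, hterm] using this
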